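/- Let A be a C-hyperideal of a commutative multiplicative hyperring G and S an MCS with A ∩ S = ∅. Then A is a quasi S-primary hyperideal of G if and only if there exists t ∈ S such that (rad(A) : t) is a prime hyperideal of G. -/

import Mathlib

open Set

/-- A commutative multiplicative hyperring: a commutative additive group with a
commutative, associative hyperoperation `hmul` satisfying `(-a)∘b = -(a∘b)`,
weak distributivity, and having an identity element `e` with `a ∈ e∘a`. -/
class MulHyperring (G : Type*) extends AddCommGroup G where
  hmul : G → G → Set G
  hmul_nonempty : ∀ a b : G, (hmul a b).Nonempty
  hmul_comm : ∀ a b : G, hmul a b = hmul b a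
  hmul_assoc : ∀ a b c : G, (⋃ x ∈ hmul a b, hmul x c) = ⋃ x ∈ hmul b c, hmul a x
  neg_hmul : ∀ a b : G, hmul (-a) b = (fun x => -x) '' (hmul a b)
  hmul_add : ∀ a b c : G,
    hmul a (b + c) ⊆ {x | ∃ u ∈ hmul a b, ∃ v ∈ hmul a c, x = u + v}
  e : G
  e_mem : ∀ a : G, a ∈ hmul e a

namespace MulHyperring

variable {G : Type*} [MulHyperring G]

/-- Hyperproduct of an element with a set: `a ∘ B = ⋃ b ∈ B, a ∘ b`. -/
def smulSet (a : G) (B : Set G) : Set G := ⋃ b ∈ B, hmul a b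

/-- Hyperproduct of two sets. -/
def setMul (A B : Set G) : Set G := ⋃ a ∈ A, ⋃ b ∈ B, hmul a b

/-- Hyperproduct `a₁ ∘ a₂ ∘ ⋯ ∘ aₙ` of a (nonempty) list of elements. -/
def hProd : List G → Set G
  | [] => ∅
  | [a] => {a}
  | a :: b :: l => smulSet a (hProd (b :: l))

/-- `aⁿ` as a hyperproduct. -/
def hPow (a : G) (n : ℕ) : Set G := hProd (List.replicate n a)

/-- `A` is a hyperideal of `G`. -/
def IsHyperideal (A : Set G) : Prop :=
  A.Nonempty ∧ (∀ x ∈ A, ∀ y ∈ A, x - y ∈ A) ∧ ∀ r : G, ∀ x ∈ A, hmul r x ⊆ A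

/-- `A` is a `C`-hyperideal: any finite hyperproduct meeting `A` is contained in `A`. -/
def IsCHyperideal (A : Set G) : Prop :=
  IsHyperideal A ∧ ∀ l : List G, l ≠ [] → (hProd l ∩ A).Nonempty → hProd l ⊆ A

/-- The radical of a (C-)hyperideal: `{a | aⁿ ⊆ A for some n ≥ 1}`. -/
def rad (A : Set G) : Set G := {a | ∃ n : ℕ, 1 ≤ n ∧ hPow a n ⊆ A}

/-- The hyperideal generated by a set. -/
def idealGen (X : Set G) : Set G := ⋂₀ {A | IsHyperideal A ∧ X ⊆ A}

/-- The hyperideal product of two hyperideals. -/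
def idealMul (A B : Set G) : Set G := idealGen (setMul A B)

/-- Multiplicative closed subset. -/
def IsMCS (S : Set G) : Prop :=
  e ∈ S ∧ ∀ s₁ ∈ S, ∀ s₂ ∈ S, (hmul s₁ s₂ ∩ S).Nonempty

/-- Prime hyperideal. -/
def IsPrime (P : Set G) : Prop :=
  IsHyperideal P ∧ P ≠ univ ∧ ∀ x y : G, hmul x y ⊆ P → x ∈ P ∨ y ∈ P

/-- `S`-prime hyperideal. -/
def IsSPrime (S A : Set G) : Prop :=
  IsHyperideal A ∧ A ∩ S = ∅ ∧
    ∃ t ∈ S, ∀ u v : G, hmul u v ⊆ A → hmul t u ⊆ A ∨ hmul t v ⊆ A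

/-- `S`-primary hyperideal. -/
def IsSPrimary (S A : Set G) : Prop :=
  IsHyperideal A ∧ A ∩ S = ∅ ∧
    ∃ t ∈ S, ∀ u v : G, hmul u v ⊆ A → hmul t u ⊆ A ∨ hmul t v ⊆ rad A

/-- Quasi `S`-primary hyperideal. -/
def IsQuasiSPrimary (S A : Set G) : Prop :=
  IsHyperideal A ∧ A ∩ S = ∅ ∧
    ∃ t ∈ S, ∀ u v : G, hmul u v ⊆ A → hmul t u ⊆ rad A ∨ hmul t v ⊆ rad A

/-- Weakly quasi `S`-primary hyperideal. -/
def IsWeaklyQuasiSPrimary (S A : Set G) : Prop :=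
  IsHyperideal A ∧ A ∩ S = ∅ ∧
    ∃ t ∈ S, ∀ u v : G, 0 ∉ hmul u v → hmul u v ⊆ A →
      hmul t u ⊆ rad A ∨ hmul t v ⊆ rad A

/-- Strongly quasi `S`-primary hyperideal. -/
def IsStronglyQuasiSPrimary (S A : Set G) : Prop :=
  IsHyperideal A ∧ A ∩ S = ∅ ∧
    ∃ t ∈ S, ∀ u v : G, hmul u v ⊆ A →
      smulSet t (hPow u 2) ⊆ A ∨ hmul t v ⊆ rad A

/-- The residual `(B : x) = {y | y ∘ x ⊆ B}`. -/
def colon (B : Set G) (x : G) : Set G := {y | hmul y x ⊆ B}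

end MulHyperring


namespace MulHyperring

variable {G : Type*} [MulHyperring G]

/-- Hyperproduct of a (nonempty) list of sets. -/
def sProd : List (Set G) → Set G
  | [] => ∅
  | [X] => X
  | X :: Y :: l => setMul X (sProd (Y :: l))

lemma mem_setMul {X Y : Set G} {z : G} :
    z ∈ setMul X Y ↔ ∃ x ∈ X, ∃ y ∈ Y, z ∈ hmul x y := by
  simp [setMul]

lemma setMul_singleton_singleton (a b : G) : setMul {a} {b} = hmul a b := by
  simp [setMul]

lemma setMul_singleton_left (a : G) (Y : Set G) : setMul {a} Y = smulSet a Y := by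
  simp [setMul, smulSet]

lemma setMul_comm (X Y : Set G) : setMul X Y = setMul Y X := by
  ext z
  simp only [mem_setMul]
  constructor
  · rintro ⟨x, hx, y, hy, hz⟩; exact ⟨y, hy, x, hx, by rwa [hmul_comm]⟩
  · rintro ⟨y, hy, x, hx, hz⟩; exact ⟨x, hx, y, hy, by rwa [hmul_comm]⟩

lemma setMul_mono {X X' Y Y' : Set G} (hX : X ⊆ X') (hY : Y ⊆ Y') :
    setMul X Y ⊆ setMul X' Y' := by
  rintro z hz
  rw [mem_setMul] at hz ⊢
  obtain ⟨x, hx, y, hy, hz⟩ := hz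
  exact ⟨x, hX hx, y, hY hy, hz⟩

lemma setMul_assoc (X Y Z : Set G) : setMul (setMul X Y) Z = setMul X (setMul Y Z) := by
  ext w
  simp only [mem_setMul]
  constructor
  · rintro ⟨v, ⟨x, hx, y, hy, hv⟩, z, hz, hw⟩
    have h := hmul_assoc x y z
    have : w ∈ ⋃ u ∈ hmul x y, hmul u z := Set.mem_biUnion hv hw
    rw [h] at this
    obtain ⟨u, hu, hw'⟩ := Set.mem_iUnion₂.mp this
    exact ⟨x, hx, u, ⟨y, hy, z, hz, hu⟩, hw'⟩
  · rintro ⟨x, hx, v, ⟨y, hy, z, hz, hv⟩, hw⟩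
    have h := hmul_assoc x y z
    have : w ∈ ⋃ u ∈ hmul y z, hmul x u := Set.mem_biUnion hv hw
    rw [← h] at this
    obtain ⟨u, hu, hw'⟩ := Set.mem_iUnion₂.mp this
    exact ⟨u, ⟨x, hx, y, hy, hu⟩, z, hz, hw'⟩

lemma setMul_nonempty {X Y : Set G} (hX : X.Nonempty) (hY : Y.Nonempty) :
    (setMul X Y).Nonempty := by
  obtain ⟨x, hx⟩ := hX
  obtain ⟨y, hy⟩ := hY
  obtain ⟨z, hz⟩ := hmul_nonempty x y
  exact ⟨z, mem_setMul.mpr ⟨x, hx, y, hy, hz⟩⟩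

lemma sProd_cons {X : Set G} {l : List (Set G)} (hl : l ≠ []) :
    sProd (X :: l) = setMul X (sProd l) := by
  cases l with
  | nil => exact absurd rfl hl
  | cons Y l => rfl

lemma sProd_append {l₁ l₂ : List (Set G)} (h₁ : l₁ ≠ []) (h₂ : l₂ ≠ []) :
    sProd (l₁ ++ l₂) = setMul (sProd l₁) (sProd l₂) := by
  induction l₁ with
  | nil => exact absurd rfl h₁
  | cons X l ih =>
    cases l with
    | nil =>
      simp only [List.cons_append, List.nil_append]
      rw [sProd_cons h₂]; rfl
    | cons Y l' =>
      have hne : (Y :: l') ≠ [] := by simp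
      have hne' : (Y :: l') ++ l₂ ≠ [] := by simp
      rw [List.cons_append, sProd_cons hne', ih hne, sProd_cons hne, setMul_assoc]

lemma sProd_perm {l l' : List (Set G)} (h : l.Perm l') : sProd l = sProd l' := by
  induction h with
  | nil => rfl
  | cons X h ih =>
    rename_i l₁ l₂
    cases l₁ with
    | nil => rw [← h.nil_eq]
    | cons Y m =>
      have h₂ : l₂ ≠ [] := by
        intro he; subst he; exact absurd (List.Perm.nil_eq h.symm) (by simp)
      rw [sProd_cons (by simp), sProd_cons h₂, ih]
  | swap X Y l =>
    cases l with
    | nil => exact (setMul_comm Y X)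
    | cons Z m =>
      rw [sProd_cons (show (X :: Z :: m) ≠ [] by simp),
        sProd_cons (show (Y :: Z :: m) ≠ [] by simp),
        sProd_cons (show (Z :: m) ≠ [] by simp),
        sProd_cons (show (Z :: m) ≠ [] by simp),
        ← setMul_assoc, ← setMul_assoc, setMul_comm Y X]
  | trans _ _ ih₁ ih₂ => rw [ih₁, ih₂]

lemma sProd_mono {l l' : List (Set G)} (h : List.Forall₂ (· ⊆ ·) l l') :
    sProd l ⊆ sProd l' := by
  induction h with
  | nil => exact subset_rfl
  | cons hXY h ih =>
    rename_i X Y l₁ l₂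
    cases l₁ with
    | nil =>
      cases h
      exact hXY
    | cons Z m =>
      have h₂ : l₂ ≠ [] := by
        intro he; subst he; cases h
      rw [sProd_cons (by simp), sProd_cons h₂]
      exact setMul_mono hXY ih

lemma sProd_nonempty {l : List (Set G)} (hl : l ≠ []) (h : ∀ X ∈ l, X.Nonempty) :
    (sProd l).Nonempty := by
  induction l with
  | nil => exact absurd rfl hl
  | cons X m ih =>
    cases m with
    | nil => exact h X (by simp)
    | cons Y m' =>
      rw [sProd_cons (by simp)]
      exact setMul_nonempty (h X (by simp)) (ih (by simp) fun Z hZ => h Z (by simp [hZ]))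

lemma hProd_eq_sProd (l : List G) : hProd l = sProd (l.map fun a => ({a} : Set G)) := by
  induction l with
  | nil => rfl
  | cons a m ih =>
    cases m with
    | nil => rfl
    | cons b m' =>
      show smulSet a (hProd (b :: m')) = _
      rw [List.map_cons, sProd_cons (by simp), ← ih, setMul_singleton_left]

lemma hPow_eq_sProd (a : G) (n : ℕ) :
    hPow a n = sProd (List.replicate n ({a} : Set G)) := by
  rw [hPow, hProd_eq_sProd, List.map_replicate]

lemma hPow_one (a : G) : hPow a 1 = {a} := rfl

lemma replicate_ne_nil {α : Type*} {n : ℕ} (hn : 1 ≤ n) (x : α) :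
    List.replicate n x ≠ [] := by
  cases n with
  | zero => omega
  | succ k => simp

lemma hPow_succ (a : G) {n : ℕ} (hn : 1 ≤ n) :
    hPow a (n + 1) = setMul {a} (hPow a n) := by
  rw [hPow_eq_sProd, hPow_eq_sProd, List.replicate_succ,
    sProd_cons (replicate_ne_nil hn _)]

lemma hPow_add (a : G) {n m : ℕ} (hn : 1 ≤ n) (hm : 1 ≤ m) :
    hPow a (n + m) = setMul (hPow a n) (hPow a m) := by
  rw [hPow_eq_sProd, hPow_eq_sProd, hPow_eq_sProd, List.replicate_add,
    sProd_append (replicate_ne_nil hn _) (replicate_ne_nil hm _)]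

lemma hPow_nonempty (a : G) {n : ℕ} (hn : 1 ≤ n) : (hPow a n).Nonempty := by
  rw [hPow_eq_sProd]
  exact sProd_nonempty (replicate_ne_nil hn _) (by
    intro X hX
    rw [List.eq_of_mem_replicate hX]
    exact ⟨a, rfl⟩)

section Ideal

variable {A : Set G} (hA : IsHyperideal A)
include hA

lemma Ideal.zero_mem : (0 : G) ∈ A := by
  obtain ⟨⟨a, ha⟩, hsub, _⟩ := hA
  simpa using hsub a ha a ha

lemma Ideal.neg_mem {x : G} (hx : x ∈ A) : -x ∈ A := by
  simpa using hA.2.1 0 (Ideal.zero_mem hA) x hx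

lemma Ideal.add_mem {x y : G} (hx : x ∈ A) (hy : y ∈ A) : x + y ∈ A := by
  simpa [sub_neg_eq_add] using hA.2.1 x hx (-y) (Ideal.neg_mem hA hy)

lemma Ideal.sum_mem {L : List G} (hL : ∀ x ∈ L, x ∈ A) : L.sum ∈ A := by
  induction L with
  | nil => simpa using Ideal.zero_mem hA
  | cons a m ih =>
    rw [List.sum_cons]
    exact Ideal.add_mem hA (hL a (by simp)) (ih fun x hx => hL x (by simp [hx]))

lemma Ideal.setMul_right_subset (X : Set G) : setMul X A ⊆ A := by
  rintro z hz
  obtain ⟨x, _, y, hy, hz⟩ := mem_setMul.mp hz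
  exact hA.2.2 x y hy hz

lemma Ideal.setMul_left_subset (X : Set G) : setMul A X ⊆ A := by
  rw [setMul_comm]
  exact Ideal.setMul_right_subset hA X

omit hA in
lemma Ideal.subset_rad : A ⊆ rad A := fun a ha =>
  ⟨1, le_refl 1, by rw [hPow_one]; exact Set.singleton_subset_iff.mpr ha⟩

end Ideal

lemma setMul_shuffle (X Y P Q : Set G) :
    setMul (setMul X Y) (setMul P Q) = setMul (setMul X P) (setMul Y Q) := by
  rw [setMul_assoc, setMul_assoc, ← setMul_assoc Y P Q, setMul_comm Y P,
    setMul_assoc P Y Q]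

lemma sProd_replicate_setMul (X Y : Set G) {n : ℕ} (hn : 1 ≤ n) :
    sProd (List.replicate n (setMul X Y)) =
      setMul (sProd (List.replicate n X)) (sProd (List.replicate n Y)) := by
  induction n with
  | zero => omega
  | succ k ih =>
    rcases Nat.eq_or_lt_of_le hn with h1 | h1
    · simp only [← h1]
      rfl
    · have hk : 1 ≤ k := by omega
      rw [List.replicate_succ, sProd_cons (replicate_ne_nil hk _), ih hk,
        List.replicate_succ (a := X), List.replicate_succ (a := Y),
        sProd_cons (replicate_ne_nil hk _), sProd_cons (replicate_ne_nil hk _),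
        setMul_shuffle]

lemma sProd_replicate_sProd {l : List (Set G)} (hl : l ≠ []) {m : ℕ} (hm : 1 ≤ m) :
    sProd (List.replicate m (sProd l)) = sProd ((List.replicate m l).flatten) := by
  induction m with
  | zero => omega
  | succ k ih =>
    rcases Nat.eq_or_lt_of_le hm with h1 | h1
    · simp only [← h1]
      simp [sProd]
    · have hk : 1 ≤ k := by omega
      have hflat : (List.replicate k l).flatten ≠ [] := by
        cases k with
        | zero => omega
        | succ j =>
          simp only [List.replicate_succ, List.flatten_cons]
          intro h
          rw [List.append_eq_nil_iff] at h
          exact hl h.1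
      rw [List.replicate_succ, sProd_cons (replicate_ne_nil hk _), ih hk,
        List.replicate_succ, List.flatten_cons, sProd_append hl hflat]

lemma forall₂_replicate {α : Type*} {R : α → α → Prop} {x y : α} (h : R x y) (n : ℕ) :
    List.Forall₂ R (List.replicate n x) (List.replicate n y) := by
  induction n with
  | zero => simp
  | succ k ih => simpa [List.replicate_succ] using ⟨h, ih⟩

lemma flatten_replicate_replicate {α : Type*} (m n : ℕ) (x : α) :
    (List.replicate m (List.replicate n x)).flatten = List.replicate (m * n) x := by
  induction m with
  | zero => simp
  | succ k ih =>
    rw [List.replicate_succ, List.flatten_cons, ih, Nat.succ_mul, Nat.add_comm,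
      List.replicate_add]

/-- `rad A` absorbs hyperproducts. -/
lemma rad_absorb {A : Set G} (hA : IsHyperideal A) {z : G} (hz : z ∈ rad A) (r : G) :
    hmul r z ⊆ rad A := by
  obtain ⟨n, hn, hzn⟩ := hz
  intro w hw
  refine ⟨n, hn, ?_⟩
  calc hPow w n = sProd (List.replicate n ({w} : Set G)) := hPow_eq_sProd w n
    _ ⊆ sProd (List.replicate n (hmul r z)) :=
        sProd_mono (forall₂_replicate (Set.singleton_subset_iff.mpr hw) n)
    _ = sProd (List.replicate n (setMul {r} {z})) := by rw [setMul_singleton_singleton]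
    _ = setMul (sProd (List.replicate n ({r} : Set G)))
          (sProd (List.replicate n ({z} : Set G))) := sProd_replicate_setMul _ _ hn
    _ ⊆ setMul (sProd (List.replicate n ({r} : Set G))) A := by
        apply setMul_mono subset_rfl
        rw [← hPow_eq_sProd]; exact hzn
    _ ⊆ A := Ideal.setMul_right_subset hA _

/-- If a power of `w` lands in `rad A`, then `w ∈ rad A` (uses the `C`-property). -/
lemma mem_rad_of_pow_subset_rad {A : Set G} (hA : IsCHyperideal A) {w : G} {n : ℕ}
    (hn : 1 ≤ n) (h : hPow w n ⊆ rad A) : w ∈ rad A := by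
  obtain ⟨c, hc⟩ := hPow_nonempty w hn
  obtain ⟨m, hm, hcm⟩ := h hc
  have hsub : hPow c m ⊆ hPow w (m * n) := by
    calc hPow c m = sProd (List.replicate m ({c} : Set G)) := hPow_eq_sProd c m
      _ ⊆ sProd (List.replicate m (hPow w n)) :=
          sProd_mono (forall₂_replicate (Set.singleton_subset_iff.mpr hc) m)
      _ = sProd (List.replicate m (sProd (List.replicate n ({w} : Set G)))) := by
          rw [← hPow_eq_sProd]
      _ = sProd ((List.replicate m (List.replicate n ({w} : Set G))).flatten) :=
          sProd_replicate_sProd (replicate_ne_nil hn _) hm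
      _ = hPow w (m * n) := by rw [flatten_replicate_replicate, ← hPow_eq_sProd]
  have hmn : 1 ≤ m * n := Nat.one_le_iff_ne_zero.mpr (by positivity)
  refine ⟨m * n, hmn, ?_⟩
  have : (hProd (List.replicate (m * n) w) ∩ A).Nonempty := by
    obtain ⟨d, hd⟩ := hPow_nonempty c hm
    exact ⟨d, hsub hd, hcm hd⟩
  exact hA.2 _ (replicate_ne_nil hmn _) this

/-- `rad A` inherits the `C`-like property. -/
lemma rad_C_like {A : Set G} (hA : IsCHyperideal A) {l : List G} (hl : l ≠ [])
    (h : (hProd l ∩ rad A).Nonempty) : hProd l ⊆ rad A := by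
  obtain ⟨z, hz, n, hn, hzn⟩ := h
  have key : ∀ y ∈ hProd l, hPow y n ⊆ hProd ((List.replicate n l).flatten) := by
    intro y hy
    calc hPow y n = sProd (List.replicate n ({y} : Set G)) := hPow_eq_sProd y n
      _ ⊆ sProd (List.replicate n (hProd l)) :=
          sProd_mono (forall₂_replicate (Set.singleton_subset_iff.mpr hy) n)
      _ = sProd (List.replicate n (sProd (l.map fun a => ({a} : Set G)))) := by
          rw [← hProd_eq_sProd]
      _ = sProd ((List.replicate n (l.map fun a => ({a} : Set G))).flatten) :=
          sProd_replicate_sProd (by simpa using hl) hn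
      _ = hProd ((List.replicate n l).flatten) := by
          rw [hProd_eq_sProd, ← List.map_replicate, List.map_flatten]
  have hJne : (List.replicate n l).flatten ≠ [] := by
    cases n with
    | zero => omega
    | succ k =>
      simp only [List.replicate_succ, List.flatten_cons]
      intro hcon
      rw [List.append_eq_nil_iff] at hcon
      exact hl hcon.1
  have hJA : hProd ((List.replicate n l).flatten) ⊆ A := by
    apply hA.2 _ hJne
    obtain ⟨d, hd⟩ := hPow_nonempty z hn
    exact ⟨d, key z hz hd, hzn hd⟩
  intro y hy
  exact ⟨n, hn, (key y hy).trans hJA⟩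

lemma smulSet_neg_image (a : G) (X : Set G) :
    smulSet a ((fun x => -x) '' X) = (fun x => -x) '' smulSet a X := by
  ext w
  simp only [smulSet, Set.mem_iUnion, Set.mem_image]
  constructor
  · rintro ⟨b, ⟨x, hx, rfl⟩, hw⟩
    rw [hmul_comm, neg_hmul, hmul_comm] at hw
    obtain ⟨u, hu, rfl⟩ := hw
    exact ⟨u, ⟨x, hx, hu⟩, rfl⟩
  · rintro ⟨u, ⟨x, hx, hu⟩, rfl⟩
    refine ⟨-x, ⟨x, hx, rfl⟩, ?_⟩
    rw [hmul_comm, neg_hmul, hmul_comm]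
    exact ⟨u, hu, rfl⟩

lemma smulSet_neg (a : G) (X : Set G) :
    smulSet (-a) X = (fun x => -x) '' smulSet a X := by
  ext w
  simp only [smulSet, Set.mem_iUnion, Set.mem_image, neg_hmul]
  constructor
  · rintro ⟨b, hb, u, hu, rfl⟩
    exact ⟨u, ⟨b, hb, hu⟩, rfl⟩
  · rintro ⟨u, ⟨b, hb, hu⟩, rfl⟩
    exact ⟨b, hb, u, hu, rfl⟩

lemma hPow_succ_smul (a : G) {n : ℕ} (hn : 1 ≤ n) :
    hPow a (n + 1) = smulSet a (hPow a n) := by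
  rw [hPow_succ a hn, setMul_singleton_left]

lemma hPow_neg (a : G) {n : ℕ} (hn : 1 ≤ n) :
    hPow (-a) n = hPow a n ∨ hPow (-a) n = (fun x => -x) '' hPow a n := by
  induction n with
  | zero => omega
  | succ k ih =>
    rcases Nat.eq_or_lt_of_le hn with h1 | h1
    · right
      simp only [← h1, hPow_one]
      simp
    · have hk : 1 ≤ k := by omega
      rw [hPow_succ_smul _ hk, hPow_succ_smul _ hk, smulSet_neg]
      rcases ih hk with h | h
      · right; rw [h]
      · left
        rw [h, smulSet_neg_image, ← Set.image_comp]
        simp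

lemma rad_neg_mem {A : Set G} (hA : IsHyperideal A) {a : G} (ha : a ∈ rad A) :
    -a ∈ rad A := by
  obtain ⟨n, hn, han⟩ := ha
  refine ⟨n, hn, ?_⟩
  rcases hPow_neg a hn with h | h
  · rw [h]; exact han
  · rw [h]
    rintro w ⟨x, hx, rfl⟩
    exact Ideal.neg_mem hA (han hx)

/-- Monomial `a^p ∘ b^q` as a hyperproduct of sets. -/
def mono (a b : G) (p q : ℕ) : Set G :=
  sProd (List.replicate p ({a} : Set G) ++ List.replicate q {b})

lemma mono_ne_nil {p q : ℕ} (h : 1 ≤ p + q) (a b : G) :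
    List.replicate p ({a} : Set G) ++ List.replicate q ({b} : Set G) ≠ [] := by
  intro hcon
  rw [List.append_eq_nil_iff] at hcon
  have := congrArg List.length hcon.1
  have := congrArg List.length hcon.2
  simp at *
  omega

lemma mono_mul_a {a b : G} {p q : ℕ} (h : 1 ≤ p + q) {c : G} (hc : c ∈ mono a b p q) :
    hmul a c ⊆ mono a b (p + 1) q := by
  have : mono a b (p + 1) q = setMul {a} (mono a b p q) := by
    rw [mono, List.replicate_succ, List.cons_append, sProd_cons (mono_ne_nil h a b)]
    rfl
  rw [this, ← setMul_singleton_singleton]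
  exact setMul_mono subset_rfl (Set.singleton_subset_iff.mpr hc)

lemma mono_mul_b {a b : G} {p q : ℕ} (h : 1 ≤ p + q) {c : G} (hc : c ∈ mono a b p q) :
    hmul b c ⊆ mono a b p (q + 1) := by
  have hperm : (List.replicate p ({a} : Set G) ++ List.replicate (q + 1) {b}).Perm
      (({b} : Set G) :: (List.replicate p {a} ++ List.replicate q {b})) := by
    rw [List.replicate_succ]
    exact List.perm_middle
  have : mono a b p (q + 1) = setMul {b} (mono a b p q) := by
    rw [mono, sProd_perm hperm, sProd_cons (mono_ne_nil h a b)]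
    rfl
  rw [this, ← setMul_singleton_singleton]
  exact setMul_mono subset_rfl (Set.singleton_subset_iff.mpr hc)

lemma hmul_list_sum (c : G) {L : List G} (hL : L ≠ []) :
    ∀ x ∈ hmul c L.sum, ∃ M : List G, M ≠ [] ∧
      (∀ w ∈ M, ∃ z ∈ L, w ∈ hmul c z) ∧ x = M.sum := by
  induction L with
  | nil => exact absurd rfl hL
  | cons z L' ih =>
    intro x hx
    cases L' with
    | nil =>
      refine ⟨[x], by simp, ?_, by simp⟩
      intro w hw
      simp only [List.mem_singleton] at hw
      subst hw
      exact ⟨z, by simp, by simpa using hx⟩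
    | cons z' L'' =>
      rw [List.sum_cons] at hx
      have := hmul_add c z (z' :: L'').sum hx
      obtain ⟨u, hu, v, hv, rfl⟩ := this
      obtain ⟨M', hM'ne, hM'mem, rfl⟩ := ih (by simp) v hv
      refine ⟨u :: M', by simp, ?_, by simp⟩
      intro w hw
      rcases List.mem_cons.mp hw with rfl | hw
      · exact ⟨z, by simp, hu⟩
      · obtain ⟨z₀, hz₀, hwz⟩ := hM'mem w hw
        exact ⟨z₀, by simp [hz₀], hwz⟩

lemma binom_expand (a b : G) :
    ∀ N : ℕ, 1 ≤ N → ∀ x ∈ hPow (a + b) N, ∃ L : List G, L ≠ [] ∧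
      (∀ z ∈ L, ∃ p q : ℕ, p + q = N ∧ z ∈ mono a b p q) ∧ x = L.sum := by
  intro N
  induction N with
  | zero => omega
  | succ k ih =>
    intro _ x hx
    rcases Nat.lt_or_ge k 1 with hk | hk
    · interval_cases k
      rw [hPow_one, Set.mem_singleton_iff] at hx
      subst hx
      refine ⟨[a, b], by simp, ?_, by simp⟩
      intro z hz
      rcases List.mem_cons.mp hz with rfl | hz
      · exact ⟨1, 0, rfl, by simp [mono, sProd]⟩
      · simp only [List.mem_singleton] at hz
        subst hz
        exact ⟨0, 1, rfl, by simp [mono, sProd]⟩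
    · rw [hPow_succ_smul _ hk] at hx
      simp only [smulSet, Set.mem_iUnion] at hx
      obtain ⟨y, hy, hxy⟩ := hx
      obtain ⟨L, hLne, hLmem, rfl⟩ := ih hk y hy
      rw [hmul_comm] at hxy
      obtain ⟨u, hu, v, hv, rfl⟩ := hmul_add L.sum a b hxy
      rw [hmul_comm] at hu hv
      obtain ⟨M₁, hM₁ne, hM₁mem, rfl⟩ := hmul_list_sum a hLne u hu
      obtain ⟨M₂, hM₂ne, hM₂mem, rfl⟩ := hmul_list_sum b hLne v hv
      refine ⟨M₁ ++ M₂, by simp [hM₁ne], ?_, by simp⟩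
      intro z hz
      rcases List.mem_append.mp hz with hz | hz
      · obtain ⟨z₀, hz₀, hzz⟩ := hM₁mem z hz
        obtain ⟨p, q, hpq, hz₀m⟩ := hLmem z₀ hz₀
        exact ⟨p + 1, q, by omega, mono_mul_a (by omega) hz₀m hzz⟩
      · obtain ⟨z₀, hz₀, hzz⟩ := hM₂mem z hz
        obtain ⟨p, q, hpq, hz₀m⟩ := hLmem z₀ hz₀
        exact ⟨p, q + 1, by omega, mono_mul_b (by omega) hz₀m hzz⟩

lemma mono_subset_left {A : Set G} (hA : IsHyperideal A) {a : G} {n : ℕ} (hn : 1 ≤ n)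
    (ha : hPow a n ⊆ A) (b : G) {p q : ℕ} (hp : n ≤ p) : mono a b p q ⊆ A := by
  have hsplit : List.replicate p ({a} : Set G) ++ List.replicate q ({b} : Set G) =
      List.replicate n ({a} : Set G) ++
        (List.replicate (p - n) ({a} : Set G) ++ List.replicate q {b}) := by
    rw [← List.append_assoc, ← List.replicate_add]
    congr 2
    omega
  rw [mono, hsplit]
  by_cases hrest : (List.replicate (p - n) ({a} : Set G) ++ List.replicate q ({b} : Set G)) = []
  · rw [hrest, List.append_nil, ← hPow_eq_sProd]
    exact ha
  · rw [sProd_append (replicate_ne_nil hn _) hrest, ← hPow_eq_sProd]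
    intro w hw
    obtain ⟨x, hx, y, _, hw⟩ := mem_setMul.mp hw
    exact hA.2.2 y x (ha hx) (by rwa [hmul_comm])

lemma mono_perm_swap (a b : G) (p q : ℕ) : mono a b p q = mono b a q p := by
  exact sProd_perm List.perm_append_comm

lemma rad_add_mem {A : Set G} (hA : IsHyperideal A) {a b : G}
    (ha : a ∈ rad A) (hb : b ∈ rad A) : a + b ∈ rad A := by
  obtain ⟨n, hn, han⟩ := ha
  obtain ⟨m, hm, hbm⟩ := hb
  refine ⟨n + m, by omega, ?_⟩
  intro x hx
  obtain ⟨L, _, hLmem, rfl⟩ := binom_expand a b (n + m) (by omega) x hx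
  apply Ideal.sum_mem hA
  intro z hz
  obtain ⟨p, q, hpq, hzm⟩ := hLmem z hz
  have hcases : n ≤ p ∨ m ≤ q := by omega
  rcases hcases with hp | hq
  · exact mono_subset_left hA hn han b hp hzm
  · rw [mono_perm_swap] at hzm
    exact mono_subset_left hA hm hbm a hq hzm

/-- `rad A` is a hyperideal. -/
lemma rad_isHyperideal {A : Set G} (hA : IsHyperideal A) : IsHyperideal (rad A) := by
  refine ⟨⟨0, Ideal.subset_rad (Ideal.zero_mem hA)⟩, ?_, ?_⟩
  · intro x hx y hy
    rw [sub_eq_add_neg]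
    exact rad_add_mem hA hx (rad_neg_mem hA hy)
  · intro r x hx
    exact rad_absorb hA hx r

lemma S_meets_pow {S : Set G} (hS : IsMCS S) {s : G} (hs : s ∈ S) :
    ∀ {n : ℕ}, 1 ≤ n → (hPow s n ∩ S).Nonempty := by
  intro n
  induction n with
  | zero => omega
  | succ k ih =>
    intro _
    rcases Nat.lt_or_ge k 1 with hk | hk
    · interval_cases k
      exact ⟨s, by rw [hPow_one]; exact rfl, hs⟩
    · obtain ⟨y, hy, hyS⟩ := ih hk
      obtain ⟨z, hz, hzS⟩ := hS.2 s hs y hyS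
      refine ⟨z, ?_, hzS⟩
      rw [hPow_succ s hk]
      exact setMul_mono subset_rfl (Set.singleton_subset_iff.mpr hy)
        (by rwa [setMul_singleton_singleton])

lemma colon_rad_isHyperideal {A : Set G} (hA : IsHyperideal A) (t : G) :
    IsHyperideal (colon (rad A) t) := by
  have hP : IsHyperideal (rad A) := rad_isHyperideal hA
  refine ⟨⟨0, ?_⟩, ?_, ?_⟩
  · show hmul 0 t ⊆ rad A
    rw [hmul_comm]
    exact hP.2.2 t 0 (Ideal.zero_mem hP)
  · intro x hx y hy
    show hmul (x - y) t ⊆ rad A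
    rw [hmul_comm]
    intro w hw
    rw [sub_eq_add_neg] at hw
    obtain ⟨u, hu, v, hv, rfl⟩ := hmul_add t x (-y) hw
    rw [hmul_comm, neg_hmul] at hv
    obtain ⟨v', hv', rfl⟩ := hv
    have huP : u ∈ rad A := hx (by rwa [hmul_comm] at hu)
    have hv'P : v' ∈ rad A := hy hv'
    rw [← sub_eq_add_neg]
    exact hP.2.1 u huP v' hv'P
  · intro r x hx w hw
    show hmul w t ⊆ rad A
    calc hmul w t = setMul {w} {t} := (setMul_singleton_singleton w t).symm
      _ ⊆ setMul (hmul r x) {t} :=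
          setMul_mono (Set.singleton_subset_iff.mpr hw) subset_rfl
      _ = setMul (setMul {r} {x}) {t} := by rw [setMul_singleton_singleton]
      _ = setMul {r} (setMul {x} {t}) := setMul_assoc _ _ _
      _ ⊆ setMul {r} (rad A) := by
          apply setMul_mono subset_rfl
          rw [setMul_singleton_singleton]
          exact hx
      _ ⊆ rad A := Ideal.setMul_right_subset hP _

lemma colon_rad_ne_univ {A S : Set G} (hA : IsCHyperideal A) (hS : IsMCS S)
    (hAS : A ∩ S = ∅) {t : G} (ht : t ∈ S) : colon (rad A) t ≠ Set.univ := by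
  intro hcon
  have htc : t ∈ colon (rad A) t := by rw [hcon]; trivial
  obtain ⟨s, hs, hsS⟩ := hS.2 t ht t ht
  obtain ⟨n, hn, hsn⟩ := htc hs
  obtain ⟨c, hc, hcS⟩ := S_meets_pow hS hsS hn
  have : c ∈ A ∩ S := ⟨hsn hc, hcS⟩
  rw [hAS] at this
  exact this

/-- A hyperproduct `t^n ∘ u^n` lands in `rad A` if `t ∘ x ⊆ rad A` for every `x ∈ u^n`. -/
lemma step_lemma {A : Set G} (hA : IsCHyperideal A) {t u : G} {n : ℕ} (hn : 1 ≤ n)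
    (hall : ∀ x ∈ hPow u n, hmul t x ⊆ rad A) : hmul t u ⊆ rad A := by
  have hP : IsHyperideal (rad A) := rad_isHyperideal hA.1
  have hTU : setMul (hPow t n) (hPow u n) ⊆ rad A := by
    have h1 : setMul {t} (hPow u n) ⊆ rad A := by
      intro w hw
      obtain ⟨c, hc, x, hx, hwc⟩ := mem_setMul.mp hw
      rw [Set.mem_singleton_iff] at hc
      rw [hc] at hwc
      exact hall x hx hwc
    rcases Nat.lt_or_ge n 2 with h2 | h2
    · interval_cases n
      rw [hPow_one]
      exact h1
    · have hk : 1 ≤ n - 1 := by omega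
      have hn' : n - 1 + 1 = n := by omega
      have heq := hPow_add t hk (le_refl 1)
      rw [hn', hPow_one] at heq
      rw [heq, setMul_assoc]
      exact (setMul_mono subset_rfl h1).trans (Ideal.setMul_right_subset hP _)
  intro w hw
  apply mem_rad_of_pow_subset_rad hA hn
  calc hPow w n = sProd (List.replicate n ({w} : Set G)) := hPow_eq_sProd w n
    _ ⊆ sProd (List.replicate n (hmul t u)) :=
        sProd_mono (forall₂_replicate (Set.singleton_subset_iff.mpr hw) n)
    _ = sProd (List.replicate n (setMul {t} {u})) := by rw [setMul_singleton_singleton]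
    _ = setMul (sProd (List.replicate n ({t} : Set G)))
          (sProd (List.replicate n ({u} : Set G))) := sProd_replicate_setMul _ _ hn
    _ = setMul (hPow t n) (hPow u n) := by rw [← hPow_eq_sProd, ← hPow_eq_sProd]
    _ ⊆ rad A := hTU

/-- The quasi-`S`-primary splitting condition extends from `A` to `rad A`. -/
lemma quasi_extend {A : Set G} (hA : IsCHyperideal A) {t : G}
    (hq : ∀ u v : G, hmul u v ⊆ A → hmul t u ⊆ rad A ∨ hmul t v ⊆ rad A) :
    ∀ u v : G, hmul u v ⊆ rad A → hmul t u ⊆ rad A ∨ hmul t v ⊆ rad A := by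
  intro u v huv
  obtain ⟨z, hz⟩ := hmul_nonempty u v
  obtain ⟨n, hn, hzn⟩ := huv hz
  have hUV : setMul (hPow u n) (hPow v n) ⊆ A := by
    have heq : hProd (List.replicate n u ++ List.replicate n v) =
        setMul (hPow u n) (hPow v n) := by
      rw [hProd_eq_sProd, List.map_append, List.map_replicate, List.map_replicate,
        sProd_append (replicate_ne_nil hn _) (replicate_ne_nil hn _),
        ← hPow_eq_sProd, ← hPow_eq_sProd]
    have hsub : hPow z n ⊆ setMul (hPow u n) (hPow v n) := by
      calc hPow z n = sProd (List.replicate n ({z} : Set G)) := hPow_eq_sProd z n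
        _ ⊆ sProd (List.replicate n (hmul u v)) :=
            sProd_mono (forall₂_replicate (Set.singleton_subset_iff.mpr hz) n)
        _ = sProd (List.replicate n (setMul {u} {v})) := by
            rw [setMul_singleton_singleton]
        _ = setMul (sProd (List.replicate n ({u} : Set G)))
              (sProd (List.replicate n ({v} : Set G))) := sProd_replicate_setMul _ _ hn
        _ = setMul (hPow u n) (hPow v n) := by rw [← hPow_eq_sProd, ← hPow_eq_sProd]
    rw [← heq]
    apply hA.2 _ (by
      intro hcon
      rw [List.append_eq_nil_iff] at hcon
      exact replicate_ne_nil hn u hcon.1)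
    obtain ⟨d, hd⟩ := hPow_nonempty z hn
    exact ⟨d, heq ▸ hsub hd, hzn hd⟩
  by_cases hall : ∀ x ∈ hPow u n, hmul t x ⊆ rad A
  · exact Or.inl (step_lemma hA hn hall)
  · push_neg at hall
    obtain ⟨x₀, hx₀, hx₀n⟩ := hall
    refine Or.inr (step_lemma hA hn fun y hy => ?_)
    rcases hq x₀ y (fun w hw => hUV (mem_setMul.mpr ⟨x₀, hx₀, y, hy, hw⟩)) with h | h
    · exact absurd h hx₀n
    · exact h

/-- Key rewriting: if `t∘c ⊆ rad A` for all `c ∈ x∘t`, then `x∘t' ⊆ rad A`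
for any `t' ∈ t∘t`. -/
lemma sProd_pair (X Y : Set G) : sProd [X, Y] = setMul X Y := rfl

lemma colon_step {A : Set G} {x t t' : G} (ht' : t' ∈ hmul t t)
    (hall : ∀ c ∈ hmul x t, hmul t c ⊆ rad A) : hmul x t' ⊆ rad A := by
  calc hmul x t' = setMul {x} {t'} := (setMul_singleton_singleton x t').symm
    _ ⊆ setMul {x} (hmul t t) := setMul_mono subset_rfl (Set.singleton_subset_iff.mpr ht')
    _ = setMul {x} (setMul {t} {t}) := by rw [setMul_singleton_singleton]
    _ = setMul (setMul {x} {t}) {t} := (setMul_assoc _ _ _).symm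
    _ = setMul {t} (setMul {x} {t}) := setMul_comm _ _
    _ ⊆ rad A := by
        intro w hw
        obtain ⟨c₁, hc₁, c, hc, hwc⟩ := mem_setMul.mp hw
        rw [Set.mem_singleton_iff] at hc₁
        rw [hc₁] at hwc
        rw [setMul_singleton_singleton] at hc
        exact hall c hc hwc

end MulHyperring

open MulHyperring in
theorem quasiSPrimary_iff_colon_rad_prime {G : Type*} [MulHyperring G] (A S : Set G) (hA : IsCHyperideal A)
    (hS : IsMCS S) (hAS : A ∩ S = ∅) :
    IsQuasiSPrimary S A ↔ ∃ t ∈ S, IsPrime (colon (rad A) t) := by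
  constructor
  · rintro ⟨hIdeal, -, t, htS, hq⟩
    obtain ⟨t', ht', ht'S⟩ := hS.2 t htS t htS
    refine ⟨t', ht'S, colon_rad_isHyperideal hA.1 t', colon_rad_ne_univ hA hS hAS ht'S, ?_⟩
    intro x y hxy
    have hE := quasi_extend hA hq
    have heq : hProd [x, t, y, t] = setMul (hmul x t) (hmul y t) := by
      rw [hProd_eq_sProd]
      show sProd ([{x}, {t}] ++ [{y}, {t}]) = _
      rw [sProd_append (by simp) (by simp), sProd_pair, sProd_pair,
        setMul_singleton_singleton, setMul_singleton_singleton]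
    have heq2 : setMul (hmul x y) (hmul t t) = setMul (hmul x t) (hmul y t) := by
      rw [← setMul_singleton_singleton x y, ← setMul_singleton_singleton t t,
        ← setMul_singleton_singleton x t, ← setMul_singleton_singleton y t,
        setMul_shuffle]
    obtain ⟨z, hz⟩ := hmul_nonempty x y
    obtain ⟨w, hw⟩ := hmul_nonempty z t'
    have hwrad : w ∈ rad A := hxy hz hw
    have hkey : setMul (hmul x t) (hmul y t) ⊆ rad A := by
      rw [← heq]
      apply rad_C_like hA (by simp)
      refine ⟨w, ?_, hwrad⟩
      rw [heq, ← heq2]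
      exact mem_setMul.mpr ⟨z, hz, t', ht', hw⟩
    by_cases hall : ∀ c ∈ hmul x t, hmul t c ⊆ rad A
    · left
      show hmul x t' ⊆ rad A
      exact colon_step ht' hall
    · right
      push_neg at hall
      obtain ⟨c₀, hc₀, hc₀n⟩ := hall
      show hmul y t' ⊆ rad A
      apply colon_step ht'
      intro d hd
      rcases hE c₀ d (fun w' hw' => hkey (mem_setMul.mpr ⟨c₀, hc₀, d, hd, hw'⟩)) with h | h
      · exact absurd h hc₀n
      · exact h
  · rintro ⟨t, htS, hP, hPne, hprime⟩
    refine ⟨hA.1, hAS, t, htS, ?_⟩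
    intro u v huv
    have hsub : hmul u v ⊆ colon (rad A) t := by
      intro z hz
      show hmul z t ⊆ rad A
      rw [hmul_comm]
      exact rad_absorb hA.1 (Ideal.subset_rad (huv hz)) t
    rcases hprime u v hsub with h | h
    · left
      rw [hmul_comm]
      exact h
    · right
      rw [hmul_comm]
      exact h
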